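/- For every τ ∈ {1,...,L}, the set Π_v produced by the greedy path-selection procedure contains a τ-restricted temporal path π from s to v with |π| ≤ (1+δ)·d_G^{(τ)}(s,v), provided d_G^{(τ)}(s,v) is finite. -/

import Mathlib

open scoped ENNReal

/-- Correctness of the greedy path-selection procedure
(Algorithm 2): `d τ` denotes the length of a shortest `τ`-restricted temporal path
from `s` to `v` (`⊤` if none exists); the procedure scans `τ = 1,…,L`, keeping a
threshold `t` (initially `⊤`) and selecting `τ` whenever `(1+δ)·d τ < t`, in which
case `t` is updated to `d τ`.  Then for every `τ ∈ {1,…,L}` with `d τ` finite there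
is a selected `τ' ≤ τ` (whose shortest `τ'`-restricted path is in particular
`τ`-restricted) with `d τ' ≤ (1+δ)·d τ`. -/
theorem stmt_6 (L : ℕ) (δ : NNReal) (hδ : 0 < δ)
    (d : ℕ → ℝ≥0∞)
    (hmono : ∀ τ τ' : ℕ, τ ≤ τ' → d τ' ≤ d τ)
    (t : ℕ → ℝ≥0∞) (ht0 : t 0 = ⊤)
    (htstep : ∀ τ : ℕ,
      t (τ + 1) =
        if (1 + (δ : ℝ≥0∞)) * d (τ + 1) < t τ then d (τ + 1) else t τ) :
    ∀ τ : ℕ, 1 ≤ τ → τ ≤ L → d τ ≠ ⊤ →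
      ∃ τ' : ℕ, 1 ≤ τ' ∧ τ' ≤ τ ∧
        (1 + (δ : ℝ≥0∞)) * d τ' < t (τ' - 1) ∧
        d τ' ≤ (1 + (δ : ℝ≥0∞)) * d τ := by
  -- invariant: t n is ⊤ or equals d τ' for some selected τ' ≤ n
  have inv : ∀ n : ℕ, t n = ⊤ ∨
      ∃ τ' : ℕ, 1 ≤ τ' ∧ τ' ≤ n ∧ (1 + (δ : ℝ≥0∞)) * d τ' < t (τ' - 1) ∧
        t n = d τ' := by
    intro n
    induction n with
    | zero => exact Or.inl ht0
    | succ m ih =>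
      rw [htstep m]
      by_cases h : (1 + (δ : ℝ≥0∞)) * d (m + 1) < t m
      · refine Or.inr ⟨m + 1, le_add_self, le_refl _, ?_, ?_⟩
        · simpa using h
        · simp [h]
      · rcases ih with h1 | ⟨τ', h2, h3, h4, h5⟩
        · exact Or.inl (by rw [if_neg h]; exact h1)
        · exact Or.inr ⟨τ', h2, h3.trans (Nat.le_succ m), h4, by rw [if_neg h]; exact h5⟩
  intro τ h1τ hτL hdτ
  by_cases hsel : (1 + (δ : ℝ≥0∞)) * d τ < t (τ - 1)
  · exact ⟨τ, h1τ, le_refl _, hsel,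
      le_mul_of_one_le_left zero_le le_self_add⟩
  · push_neg at hsel
    have htop : t (τ - 1) ≠ ⊤ := by
      intro h
      rw [h] at hsel
      have : (1 + (δ : ℝ≥0∞)) * d τ ≠ ⊤ :=
        ENNReal.mul_ne_top (by simp [ENNReal.add_ne_top]) hdτ
      exact this (top_le_iff.mp hsel)
    rcases inv (τ - 1) with h | ⟨τ', h2, h3, h4, h5⟩
    · exact absurd h htop
    · exact ⟨τ', h2, h3.trans (Nat.sub_le τ 1), h4, h5 ▸ hsel⟩
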